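/- arXiv:2412.16193 — 2 statements merged into one kernel-verified Lean document; each statement's English description precedes it below -/
import Mathlib

section
/- For a prime p and positive integers k and l, the formal power series identity (∏_{i≥1}(1-q^{ki}))^{p^l} ≡ (∏_{i≥1}(1-q^{pki}))^{p^{l-1}} holds modulo p^l, i.e., all coefficients of the difference are divisible by p^l. -/
noncomputable def fps (k : ℕ) : PowerSeries ℤ :=
  PowerSeries.mk fun n =>
    PowerSeries.coeff n (∏ i ∈ Finset.range (n+1), (1 - PowerSeries.X ^ (k*(i+1))))

noncomputable def Fpoly (k N : ℕ) : Polynomial ℤ :=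
  ∏ i ∈ Finset.range N, (1 - Polynomial.X ^ (k*(i+1)))

lemma Fpoly_coe (k N : ℕ) :
    ((Fpoly k N : Polynomial ℤ) : PowerSeries ℤ)
      = ∏ i ∈ Finset.range N, (1 - PowerSeries.X ^ (k*(i+1))) := by
  rw [Fpoly, ← Polynomial.coeToPowerSeries.ringHom_apply, map_prod]
  simp

lemma coeff_prod_stable (k : ℕ) (hk : 0 < k) (m N : ℕ) (hN : m + 1 ≤ N) :
    PowerSeries.coeff m (∏ i ∈ Finset.range N, (1 - (PowerSeries.X : PowerSeries ℤ) ^ (k*(i+1))))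
      = PowerSeries.coeff m (∏ i ∈ Finset.range (m+1), (1 - PowerSeries.X ^ (k*(i+1)))) := by
  induction N with
  | zero => omega
  | succ N ih =>
    rcases Nat.lt_or_ge (m+1) (N+1) with h | h
    · have hN' : m + 1 ≤ N := by omega
      rw [Finset.prod_range_succ, mul_sub, mul_one, map_sub, ih hN']
      have hz : PowerSeries.coeff m
          ((∏ i ∈ Finset.range N, (1 - (PowerSeries.X : PowerSeries ℤ) ^ (k*(i+1)))) * PowerSeries.X ^ (k*(N+1))) = 0 := by
        have hd : (PowerSeries.X : PowerSeries ℤ) ^ (m+1) ∣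
            (∏ i ∈ Finset.range N, (1 - PowerSeries.X ^ (k*(i+1)))) * PowerSeries.X ^ (k*(N+1)) := by
          apply Dvd.dvd.mul_left
          exact pow_dvd_pow _ (by nlinarith)
        rw [PowerSeries.X_pow_dvd_iff] at hd
        exact hd m (by omega)
      rw [hz, sub_zero]
    · have : N + 1 = m + 1 := by omega
      rw [this]

lemma fps_pow_coeff (k : ℕ) (hk : 0 < k) (n M : ℕ) :
    PowerSeries.coeff n (fps k ^ M)
      = PowerSeries.coeff n (((Fpoly k (n+1) : Polynomial ℤ) : PowerSeries ℤ) ^ M) := by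
  have hdvd : (PowerSeries.X : PowerSeries ℤ) ^ (n+1) ∣
      fps k - ((Fpoly k (n+1) : Polynomial ℤ) : PowerSeries ℤ) := by
    rw [PowerSeries.X_pow_dvd_iff]
    intro m hm
    rw [map_sub, Fpoly_coe]
    have h1 : PowerSeries.coeff m (fps k)
        = PowerSeries.coeff m (∏ i ∈ Finset.range (m+1), (1 - PowerSeries.X ^ (k*(i+1)))) := by
      simp [fps]
    rw [h1, coeff_prod_stable k hk m (n+1) (by omega), sub_self]
  have hdvd2 : (PowerSeries.X : PowerSeries ℤ) ^ (n+1) ∣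
      fps k ^ M - ((Fpoly k (n+1) : Polynomial ℤ) : PowerSeries ℤ) ^ M :=
    hdvd.trans (sub_dvd_pow_sub_pow _ _ M)
  rw [PowerSeries.X_pow_dvd_iff] at hdvd2
  have := hdvd2 n (by omega)
  rw [map_sub, sub_eq_zero] at this
  exact this

lemma frob_key (p : ℕ) (hp : p.Prime) (k N : ℕ) :
    ((p : Polynomial ℤ)) ∣ Fpoly k N ^ p - Fpoly (p*k) N := by
  haveI := Fact.mk hp
  rw [← Polynomial.C_eq_natCast, Polynomial.C_dvd_iff_dvd_coeff]
  intro i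
  have hmap : Polynomial.map (Int.castRingHom (ZMod p)) (Fpoly k N ^ p - Fpoly (p*k) N) = 0 := by
    rw [Polynomial.map_sub, Polynomial.map_pow]
    have h1 : Polynomial.map (Int.castRingHom (ZMod p)) (Fpoly (p*k) N)
        = Polynomial.expand (ZMod p) p (Polynomial.map (Int.castRingHom (ZMod p)) (Fpoly k N)) := by
      simp only [Fpoly, Polynomial.map_prod, map_prod, Polynomial.map_sub, Polynomial.map_one,
        Polynomial.map_pow, Polynomial.map_X, map_sub, map_one, map_pow,
        Polynomial.expand_X]
      refine Finset.prod_congr rfl fun i _ => ?_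
      rw [← pow_mul, mul_assoc]
    rw [h1]
    have h2 := Polynomial.map_frobenius_expand p (Polynomial.map (Int.castRingHom (ZMod p)) (Fpoly k N))
    rw [ZMod.frobenius_zmod, Polynomial.map_id] at h2
    rw [h2, sub_self]
  have := congrArg (fun f => Polynomial.coeff f i) hmap
  simp only [Polynomial.coeff_map, Polynomial.coeff_zero, Int.coe_castRingHom] at this
  rwa [ZMod.intCast_zmod_eq_zero_iff_dvd] at this

theorem stmt1 (p : ℕ) (hp : p.Prime) (k l : ℕ) (hk : 0 < k) (hl : 0 < l) (n : ℕ) :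
    ((p : ℤ) ^ l) ∣ PowerSeries.coeff n (fps k ^ (p ^ l) - fps (p * k) ^ (p ^ (l - 1))) := by
  have hpk : 0 < p * k := Nat.mul_pos hp.pos hk
  have hd : ((p : Polynomial ℤ)) ^ l ∣ Fpoly k (n+1) ^ (p ^ l) - Fpoly (p*k) (n+1) ^ (p ^ (l-1)) := by
    have h := dvd_sub_pow_of_dvd_sub (frob_key p hp k (n+1)) (l-1)
    have hl1 : l - 1 + 1 = l := by omega
    rw [hl1, ← pow_mul, ← pow_succ'] at h
    have hl2 : l - 1 + 1 = l := by omega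
    rwa [hl2] at h
  have hcoeff : ((p : ℤ)) ^ l ∣
      (Fpoly k (n+1) ^ (p ^ l) - Fpoly (p*k) (n+1) ^ (p ^ (l-1))).coeff n := by
    have : ((p : Polynomial ℤ)) ^ l = Polynomial.C ((p : ℤ) ^ l) := by
      rw [map_pow, Polynomial.C_eq_natCast]
    rw [this, Polynomial.C_dvd_iff_dvd_coeff] at hd
    exact hd n
  rw [map_sub, fps_pow_coeff k hk n (p^l), fps_pow_coeff (p*k) hpk n (p^(l-1))]
  rw [← map_sub]
  have : (((Fpoly k (n+1) : Polynomial ℤ) : PowerSeries ℤ) ^ p ^ l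
      - ((Fpoly (p*k) (n+1) : Polynomial ℤ) : PowerSeries ℤ) ^ p ^ (l-1))
      = ((Fpoly k (n+1) ^ (p ^ l) - Fpoly (p*k) (n+1) ^ (p ^ (l-1)) : Polynomial ℤ) : PowerSeries ℤ) := by
    push_cast
    ring
  rw [this, Polynomial.coeff_coe]
  exact hcoeff
end

section
/- Let p ≥ 3 be a prime and let r with 1 ≤ r ≤ p−1 be such that 8r+1 is a quadratic nonresidue modulo p. Then for all n ≥ 0, T_2(9(pn+r)+1) ≡ 0 (mod 6). -/
noncomputable def Tcount (ℓ k n : ℕ) : ℕ :=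
  Nat.card {f : Fin k → Σ m : ℕ, Nat.Partition m //
    (∑ i, (f i).1) = n ∧ ∀ i, ∀ p ∈ (f i).2.parts, ¬ ℓ ∣ p}


open PowerSeries

namespace Theorems100

noncomputable section

variable {α : Type*}

open Finset

open scoped Classical

theorem partition_theorem (n : ℕ) : #(Nat.Partition.odds n) = #(Nat.Partition.distincts n) :=
  Nat.Partition.card_odds_eq_card_distincts n

end

end Theorems100

namespace Aux

/-- If a permutation satisfies `σ ^ p = 1` for a prime `p`, the cardinality of the type is
congruent to the number of fixed points of `σ` modulo `p`. -/
lemma card_modEq_fixed {α : Type*} [Finite α] {p : ℕ} (hp : p.Prime)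
    (σ : Equiv.Perm α) (hσ : σ ^ p = 1) :
    Nat.card α ≡ Nat.card {x : α // σ x = x} [MOD p] := by
  haveI : Fact p.Prime := ⟨hp⟩
  let G : Subgroup (Equiv.Perm α) := Subgroup.zpowers σ
  have hG : IsPGroup p G := by
    intro g
    refine ⟨1, ?_⟩
    obtain ⟨n, hn⟩ := g.2
    have : (g ^ p ^ 1 : Subgroup.zpowers σ) = 1 := by
      apply Subtype.ext
      push_cast
      have hg : (g : Equiv.Perm α) = σ ^ n := hn.symm
      rw [hg, pow_one, ← zpow_natCast, ← zpow_mul, mul_comm, zpow_mul, zpow_natCast, hσ, one_zpow]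
    exact this
  have key := hG.card_modEq_card_fixedPoints (α := α)
  have : Nat.card (MulAction.fixedPoints G α) = Nat.card {x : α // σ x = x} := by
    apply Nat.card_congr
    apply Equiv.subtypeEquiv (Equiv.refl α)
    intro a
    simp only [Equiv.refl_apply, MulAction.mem_fixedPoints]
    constructor
    · intro h
      have := h ⟨σ, Subgroup.mem_zpowers σ⟩
      exact this
    · intro h g
      obtain ⟨n, hn⟩ := g.2
      show (g : Equiv.Perm α) • a = a
      rw [← hn]
      have hnat : ∀ m : ℕ, (σ ^ m) • a = a := by
        intro m
        induction m with
        | zero => simp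
        | succ k ih =>
            rw [pow_succ, mul_smul]
            have : σ • a = a := h
            rw [this, ih]
      rcases n with m | m
      · exact_mod_cast hnat m
      · have h1 : (σ ^ (m + 1) : Equiv.Perm α) • ((σ ^ (Int.negSucc m)) • a) = a := by
          rw [← mul_smul, ← zpow_natCast, ← zpow_add]
          simp only [Int.negSucc_eq]
          ring_nf
          simp
        have h2 := hnat (m + 1)
        -- σ^(m+1) is injective as an equiv; from h1 and h2 conclude
        have : (σ ^ (m + 1) : Equiv.Perm α) • ((σ ^ (Int.negSucc m)) • a)
             = (σ ^ (m + 1) : Equiv.Perm α) • a := by rw [h1, h2]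
        exact smul_left_cancel _ this
  rwa [this] at key

lemma card_modEq_fixed_two {α : Type*} [Finite α]
    (σ : Equiv.Perm α) (hσ : σ ^ 2 = 1) :
    Nat.card α ≡ Nat.card {x : α // σ x = x} [MOD 2] :=
  card_modEq_fixed Nat.prime_two σ hσ

lemma three_dvd_card {α : Type*} [Finite α]
    (σ : Equiv.Perm α) (hσ : σ ^ 3 = 1) (hfix : ∀ x : α, σ x ≠ x) :
    3 ∣ Nat.card α := by
  have h := card_modEq_fixed Nat.prime_three σ hσ
  have : Nat.card {x : α // σ x = x} = 0 := by
    have : IsEmpty {x : α // σ x = x} := ⟨fun x => hfix x.1 x.2⟩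
    simp [Nat.card_of_isEmpty]
  rw [this] at h
  exact (Nat.modEq_zero_iff_dvd).1 h

end Aux

namespace Aux
open Finset

/-- positivity predicate for finsets of naturals -/
def PosF (S : Finset ℕ) : Prop := ∀ x ∈ S, 0 < x

/-- oddness predicate -/
def OddF (S : Finset ℕ) : Prop := ∀ x ∈ S, x % 2 = 1

/-- triangular numbers -/
def Tn : ℕ → ℕ
  | 0 => 0
  | (k+1) => Tn k + (k+1)

lemma Tn_succ (k : ℕ) : Tn (k+1) = Tn k + (k+1) := rfl

lemma Tn_mono : StrictMono Tn := by
  apply strictMono_nat_of_lt_succ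
  intro k; rw [Tn_succ]; omega

lemma le_Tn (k : ℕ) : k ≤ Tn k := by
  induction k with
  | zero => simp [Tn]
  | succ k ih => rw [Tn_succ]; omega

lemma eight_Tn_add_one (k : ℕ) : 8 * Tn k + 1 = (2*k+1)^2 := by
  induction k with
  | zero => simp [Tn]
  | succ k ih => rw [Tn_succ]; ring_nf; ring_nf at ih; omega

/-- encoding of bounded finsets, for finiteness arguments -/
def encF (n : ℕ) (S : Finset ℕ) : Fin (n+1) → Bool := fun i => decide (i.1 ∈ S)

lemma encF_inj {n : ℕ} {S T : Finset ℕ} (hS : ∀ x ∈ S, x ≤ n) (hT : ∀ x ∈ T, x ≤ n)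
    (h : encF n S = encF n T) : S = T := by
  ext x
  constructor
  · intro hx
    have hb := congrFun h ⟨x, Nat.lt_succ_of_le (hS x hx)⟩
    simp only [encF, decide_eq_decide] at hb
    exact hb.1 hx
  · intro hx
    have hb := congrFun h ⟨x, Nat.lt_succ_of_le (hT x hx)⟩
    simp only [encF, decide_eq_decide] at hb
    exact hb.2 hx

lemma mem_le_sum {S : Finset ℕ} {x : ℕ} (hx : x ∈ S) : x ≤ S.sum id :=
  Finset.single_le_sum (f := id) (fun i _ => Nat.zero_le i) hx

end Aux

namespace Aux
open Finset

/-- the type of triples of odd partitions with total sum `n` -/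
def X3 (n : ℕ) : Type := {f : Fin 3 → Σ m : ℕ, Nat.Partition m //
    (∑ i, (f i).1) = n ∧ ∀ i, ∀ p ∈ (f i).2.parts, ¬ 2 ∣ p}

lemma X3_comp_le {n : ℕ} (f : X3 n) (i : Fin 3) : (f.1 i).1 ≤ n := by
  have hsum := f.2.1
  calc (f.1 i).1 ≤ ∑ j, (f.1 j).1 :=
        Finset.single_le_sum (f := fun j => (f.1 j).1) (fun j _ => Nat.zero_le _) (mem_univ i)
    _ = n := hsum

instance X3_finite (n : ℕ) : Finite (X3 n) := by
  have : Function.Injective (fun (f : X3 n) =>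
      (fun i => (⟨⟨(f.1 i).1, Nat.lt_succ_of_le (X3_comp_le f i)⟩, (f.1 i).2⟩ :
        Σ m : Fin (n+1), Nat.Partition m))) := by
    intro f g h
    apply Subtype.ext
    funext i
    have hi := congrFun h i
    simp only [Sigma.mk.inj_iff, Fin.mk.injEq] at hi
    obtain ⟨h1, h2⟩ := hi
    have h1' : (f.1 i).1 = (g.1 i).1 := h1
    exact Sigma.ext h1' h2
  exact Finite.of_injective _ this

/-- rotation permutation on `X3 n` -/
def rotX {n : ℕ} : X3 n → X3 n := fun f =>
  ⟨fun i => f.1 (finRotate 3 i), by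
    constructor
    · rw [Equiv.sum_comp (finRotate 3) (fun i => (f.1 i).1)]
      exact f.2.1
    · intro i
      exact f.2.2 _⟩

lemma rotX_cube {n : ℕ} (f : X3 n) : rotX (rotX (rotX f)) = f := by
  apply Subtype.ext
  funext i
  show f.1 (finRotate 3 (finRotate 3 (finRotate 3 i))) = f.1 i
  have : finRotate 3 (finRotate 3 (finRotate 3 i)) = i := by revert i; decide
  rw [this]

def rotE {n : ℕ} : Equiv.Perm (X3 n) :=
  ⟨rotX, fun f => rotX (rotX f), fun f => rotX_cube f, fun f => by
    have := rotX_cube f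
    exact this⟩

lemma rotE_pow_three {n : ℕ} : (rotE (n := n)) ^ 3 = 1 := by
  ext f
  show rotX (rotX (rotX f)) = f
  exact rotX_cube f

lemma rotE_fixed {n : ℕ} (h3 : ¬ 3 ∣ n) (f : X3 n) : rotE f ≠ f := by
  intro hf
  have h01 : ∀ i, f.1 (finRotate 3 i) = f.1 i := by
    intro i
    exact congrFun (congrArg Subtype.val hf) i
  have e0 : f.1 1 = f.1 0 := by have := h01 0; simpa using this
  have e1 : f.1 2 = f.1 1 := by have := h01 1; simpa using this
  have hs := f.2.1
  rw [Fin.sum_univ_three] at hs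
  rw [e0, e1, e0] at hs
  exact h3 ⟨(f.1 0).1, by omega⟩

end Aux

namespace Aux
open Finset

abbrev EoddP (m : ℕ) : Type := {c : Nat.Partition m // ∀ p ∈ c.parts, ¬ 2 ∣ p}
abbrev EdistP (m : ℕ) : Type := {c : Nat.Partition m // c.parts.Nodup}

lemma card_EoddP_eq (m : ℕ) : Fintype.card (EoddP m) = Fintype.card (EdistP m) := by
  have e1 : EoddP m ≃ {c // c ∈ Nat.Partition.odds m} := by
    apply Equiv.subtypeEquivRight
    intro c
    rw [Nat.Partition.odds, Nat.Partition.restricted, Finset.mem_filter]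
    constructor
    · intro h
      refine ⟨Finset.mem_univ c, fun i hi => ?_⟩
      rw [Nat.even_iff]
      have h2 := h i hi
      rw [Nat.dvd_iff_mod_eq_zero] at h2
      exact h2
    · rintro ⟨-, h⟩ p hp
      have h2 := h p hp
      rw [Nat.even_iff] at h2
      rw [Nat.dvd_iff_mod_eq_zero]
      exact h2
  have e2 : EdistP m ≃ {c // c ∈ Nat.Partition.distincts m} := by
    apply Equiv.subtypeEquivRight
    intro c
    rw [Nat.Partition.distincts, Finset.mem_filter]
    exact ⟨fun h => ⟨Finset.mem_univ c, h⟩, fun h => h.2⟩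
  rw [Fintype.card_congr e1, Fintype.card_congr e2,
    Fintype.card_coe, Fintype.card_coe, Theorems100.partition_theorem]

/-- Equivalence between the two kinds of partitions of `m`. -/
noncomputable def oddDistEquiv (m : ℕ) : EoddP m ≃ EdistP m :=
  Fintype.equivOfCardEq (card_EoddP_eq m)

end Aux

namespace Aux
open Finset

abbrev PF : Type := {S : Finset ℕ // PosF S}

def TriD (n : ℕ) : Type :=
  {t : Finset ℕ × Finset ℕ × Finset ℕ // PosF t.1 ∧ PosF t.2.1 ∧ PosF t.2.2 ∧
    t.1.sum id + t.2.1.sum id + t.2.2.sum id = n}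

/-- from a positive finset to a sigma-packed distinct partition -/
def pfToSig (S : PF) : Σ m : ℕ, EdistP m :=
  ⟨S.1.sum id, ⟨⟨S.1.val, fun {i} hi => S.2 i hi, by rw [Finset.sum]; rw [Multiset.map_id]⟩, S.1.nodup⟩⟩

lemma sigE_ext {x y : Σ m : ℕ, EdistP m} (h : x.2.1.parts = y.2.1.parts) : x = y := by
  obtain ⟨m, c, hc⟩ := x
  obtain ⟨m', c', hc'⟩ := y
  simp only at h
  have hm : m = m' := by rw [← c.parts_sum, ← c'.parts_sum, h]
  subst hm
  exact congrArg (Sigma.mk m) (Subtype.ext (Nat.Partition.ext h))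

lemma pfToSig_bij : Function.Bijective pfToSig := by
  constructor
  · intro S T h
    have := congrArg (fun x : Σ m : ℕ, EdistP m => x.2.1.parts) h
    simp only [pfToSig] at this
    exact Subtype.ext (Finset.val_inj.1 this)
  · rintro ⟨m, c, hc⟩
    refine ⟨⟨c.parts.toFinset, fun x hx => c.parts_pos (Multiset.mem_toFinset.1 hx)⟩, ?_⟩
    apply sigE_ext
    show c.parts.toFinset.val = c.parts
    rw [Multiset.toFinset_val, Multiset.dedup_eq_self.2 hc]

noncomputable def sigToPF : (Σ m : ℕ, EdistP m) ≃ PF :=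
  (Equiv.ofBijective pfToSig pfToSig_bij).symm

lemma sigToPF_sum (x : Σ m : ℕ, EdistP m) : (sigToPF x).1.sum id = x.1 := by
  have : pfToSig (sigToPF x) = x := (Equiv.ofBijective pfToSig pfToSig_bij).apply_symm_apply x
  have h2 := congrArg (fun y : Σ m : ℕ, EdistP m => y.1) this
  exact h2

/-- package the odd-partition triple type -/
def XoT (n : ℕ) : Type := {f : Fin 3 → Σ m : ℕ, EoddP m // (∑ i, (f i).1) = n}
def XdT (n : ℕ) : Type := {f : Fin 3 → Σ m : ℕ, EdistP m // (∑ i, (f i).1) = n}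

def x3ToXo (n : ℕ) : X3 n ≃ XoT n where
  toFun f := ⟨fun i => ⟨(f.1 i).1, ⟨(f.1 i).2, f.2.2 i⟩⟩, f.2.1⟩
  invFun g := ⟨fun i => ⟨(g.1 i).1, (g.1 i).2.1⟩, ⟨g.2, fun i => (g.1 i).2.2⟩⟩
  left_inv f := rfl
  right_inv g := rfl

noncomputable def xoToXd (n : ℕ) : XoT n ≃ XdT n := by
  apply Equiv.subtypeEquiv (Equiv.piCongrRight (fun _ => Equiv.sigmaCongrRight (oddDistEquiv)))
  intro f
  constructor <;> intro h <;> rw [← h] <;> apply Finset.sum_congr rfl <;> intro i _ <;> rfl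

noncomputable def xdToTriD (n : ℕ) : XdT n ≃ TriD n := by
  have e1 : XdT n ≃ {f : Fin 3 → PF // (∑ i, (f i).1.sum id) = n} := by
    apply Equiv.subtypeEquiv (Equiv.piCongrRight (fun _ => sigToPF))
    intro f
    have hp : ∀ i, (((Equiv.piCongrRight fun _ => sigToPF) f i) : Finset ℕ).sum id = (f i).1 :=
      fun i => sigToPF_sum (f i)
    constructor
    · intro h
      rw [← h]
      exact Finset.sum_congr rfl fun i _ => hp i
    · intro h
      rw [← h]
      exact Finset.sum_congr rfl fun i _ => (hp i).symm
  refine e1.trans ?_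
  refine ⟨fun f => ⟨((f.1 0).1, (f.1 1).1, (f.1 2).1),
      (f.1 0).2, (f.1 1).2, (f.1 2).2, by
        have := f.2; rwa [Fin.sum_univ_three] at this⟩,
    fun t => ⟨![⟨t.1.1, t.2.1⟩, ⟨t.1.2.1, t.2.2.1⟩, ⟨t.1.2.2, t.2.2.2.1⟩], by
        rw [Fin.sum_univ_three]; exact t.2.2.2.2⟩, ?_, ?_⟩
  · intro f
    apply Subtype.ext
    funext i
    fin_cases i <;> rfl
  · intro t
    apply Subtype.ext
    rfl

noncomputable def x3ToTriD (n : ℕ) : X3 n ≃ TriD n :=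
  ((x3ToXo n).trans (xoToXd n)).trans (xdToTriD n)

instance (n : ℕ) : Finite (TriD n) := Finite.of_equiv _ (x3ToTriD n)

end Aux

namespace Aux
open Finset

def P2 : Type := {st : Finset ℕ × Finset ℕ // PosF st.1}
def wt2 (y : P2) : ℕ := y.1.1.sum id + y.1.2.sum id
def chg (y : P2) : ℤ := (y.1.1.card : ℤ) - (y.1.2.card : ℤ)

lemma chg_odd_iff (y : P2) : Odd (chg y) ↔ Odd (y.1.1.card + y.1.2.card) := by
  rw [Int.odd_iff, Nat.odd_iff, chg]
  omega

def TriB (n : ℕ) : Type :=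
  {t : Finset ℕ × P2 // PosF t.1 ∧ Odd (chg t.2) ∧ t.1.sum id + wt2 t.2 = n}

lemma erase_zero_sum (T : Finset ℕ) : (T.erase 0).sum id = T.sum id := by
  by_cases h : 0 ∈ T
  · exact Finset.sum_erase _ rfl
  · rw [Finset.erase_eq_of_notMem h]

noncomputable def triDToTriB (n : ℕ) : TriD n ≃ TriB n where
  toFun t :=
    ⟨(t.1.1, ⟨(t.1.2.1, if Odd (t.1.2.1.card + t.1.2.2.card) then t.1.2.2
        else insert 0 t.1.2.2), t.2.2.1⟩), by
      obtain ⟨⟨A, S, T⟩, hA, hS, hT, hsum⟩ := t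
      refine ⟨hA, ?_, ?_⟩
      · rw [chg_odd_iff]
        simp only
        by_cases h : Odd (S.card + T.card)
        · rw [if_pos h]; exact h
        · rw [if_neg h]
          have h0 : 0 ∉ T := fun hc => by have := hT 0 hc; omega
          rw [Finset.card_insert_of_notMem h0]
          rw [Nat.odd_iff] at h ⊢
          omega
      · have hsum' : A.sum id + S.sum id + T.sum id = n := hsum
        simp only [wt2]
        by_cases h : Odd (S.card + T.card)
        · rw [if_pos h]
          show A.sum id + (S.sum id + T.sum id) = n
          omega
        · rw [if_neg h]
          have h0 : 0 ∉ T := fun hc => by have := hT 0 hc; omega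
          show A.sum id + (S.sum id + (insert 0 T).sum id) = n
          rw [Finset.sum_insert h0]
          have : id 0 + T.sum id = T.sum id := by simp
          rw [this]
          omega⟩
  invFun t :=
    ⟨(t.1.1, t.1.2.1.1, t.1.2.1.2.erase 0), by
      obtain ⟨⟨A, ⟨⟨S, T⟩, hS⟩⟩, hA, hodd, hsum⟩ := t
      refine ⟨hA, hS, fun x hx => ?_, ?_⟩
      · have := Finset.mem_erase.1 hx
        omega
      · have hsum' : A.sum id + (S.sum id + T.sum id) = n := hsum
        show A.sum id + S.sum id + (T.erase 0).sum id = n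
        rw [erase_zero_sum]
        omega⟩
  left_inv t := by
    obtain ⟨⟨A, S, T⟩, hA, hS, hT, hsum⟩ := t
    apply Subtype.ext
    have h0 : 0 ∉ T := fun hc => by have := hT 0 hc; omega
    have hX : (if Odd (S.card + T.card) then T else insert 0 T).erase 0 = T := by
      by_cases h : Odd (S.card + T.card)
      · rw [if_pos h, Finset.erase_eq_of_notMem h0]
      · rw [if_neg h, Finset.erase_insert h0]
    show (A, S, (if Odd (S.card + T.card) then T else insert 0 T).erase 0) = (A, S, T)
    rw [hX]
  right_inv t := by
    obtain ⟨⟨A, ⟨⟨S, T⟩, hS⟩⟩, hA, hodd, hsum⟩ := t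
    apply Subtype.ext
    rw [chg_odd_iff] at hodd
    simp only at hodd
    have hX : (if Odd (S.card + (T.erase 0).card) then T.erase 0
        else insert 0 (T.erase 0)) = T := by
      by_cases h0 : 0 ∈ T
      · have hc : (T.erase 0).card = T.card - 1 := Finset.card_erase_of_mem h0
        have hne : ¬ Odd (S.card + (T.erase 0).card) := by
          rw [Nat.odd_iff] at hodd ⊢
          have hTpos : 0 < T.card := Finset.card_pos.2 ⟨0, h0⟩
          omega
        rw [if_neg hne, Finset.insert_erase h0]
      · rw [Finset.erase_eq_of_notMem h0]
        rw [if_pos hodd]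
    show (A, (⟨(S, if Odd (S.card + (T.erase 0).card) then T.erase 0
        else insert 0 (T.erase 0)), _⟩ : P2)) = (A, (⟨(S, T), hS⟩ : P2))
    congr 1
    apply Subtype.ext
    rw [hX]
end Aux

namespace Aux
open Finset

def shiftS (S : Finset ℕ) : Finset ℕ := (S.erase 1).image (· - 1)
def shiftT (S T : Finset ℕ) : Finset ℕ := T.image (· + 1) ∪ (if 1 ∈ S then ∅ else {0})
def unshiftS (S' T' : Finset ℕ) : Finset ℕ := S'.image (· + 1) ∪ (if 0 ∈ T' then ∅ else {1})
def unshiftT (T' : Finset ℕ) : Finset ℕ := (T'.erase 0).image (· - 1)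

lemma mem_shiftS {S : Finset ℕ} (hS : PosF S) {x : ℕ} :
    x ∈ shiftS S ↔ 0 < x ∧ x + 1 ∈ S := by
  simp only [shiftS, mem_image, mem_erase]
  constructor
  · rintro ⟨s, ⟨hs1, hsS⟩, rfl⟩
    have := hS s hsS
    constructor
    · omega
    · have : s - 1 + 1 = s := by omega
      rw [this]; exact hsS
  · rintro ⟨hx, hxS⟩
    exact ⟨x + 1, ⟨by omega, hxS⟩, by omega⟩

lemma mem_shiftT {S T : Finset ℕ} {x : ℕ} :
    x ∈ shiftT S T ↔ (0 < x ∧ x - 1 ∈ T) ∨ (x = 0 ∧ 1 ∉ S) := by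
  simp only [shiftT, mem_union, mem_image]
  constructor
  · rintro (⟨t, htT, rfl⟩ | h)
    · left; exact ⟨by omega, by simpa using htT⟩
    · by_cases h1 : 1 ∈ S
      · rw [if_pos h1] at h; simp at h
      · rw [if_neg h1] at h; simp at h; right; exact ⟨h, h1⟩
  · rintro (⟨hx, hxT⟩ | ⟨rfl, h1⟩)
    · left; exact ⟨x - 1, hxT, by omega⟩
    · right; rw [if_neg h1]; simp

lemma mem_unshiftS {S' T' : Finset ℕ} {x : ℕ} :
    x ∈ unshiftS S' T' ↔ (0 < x ∧ x - 1 ∈ S') ∨ (x = 1 ∧ 0 ∉ T') := by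
  simp only [unshiftS, mem_union, mem_image]
  constructor
  · rintro (⟨s, hsS, rfl⟩ | h)
    · left; exact ⟨by omega, by simpa using hsS⟩
    · by_cases h0 : 0 ∈ T'
      · rw [if_pos h0] at h; simp at h
      · rw [if_neg h0] at h; simp at h; right; exact ⟨h, h0⟩
  · rintro (⟨hx, hxS⟩ | ⟨rfl, h0⟩)
    · left; exact ⟨x - 1, hxS, by omega⟩
    · right; rw [if_neg h0]; simp

lemma mem_unshiftT {T' : Finset ℕ} {x : ℕ} :
    x ∈ unshiftT T' ↔ x + 1 ∈ T' := by
  simp only [unshiftT, mem_image, mem_erase]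
  constructor
  · rintro ⟨t, ⟨ht0, htT⟩, rfl⟩
    have : t - 1 + 1 = t := by omega
    rw [this]; exact htT
  · intro h
    exact ⟨x + 1, ⟨by omega, h⟩, by omega⟩

def shiftF : P2 → P2 := fun y =>
  ⟨(shiftS y.1.1, shiftT y.1.1 y.1.2), by
    intro x hx
    rw [mem_shiftS y.2] at hx
    exact hx.1⟩

def unshiftF : P2 → P2 := fun y =>
  ⟨(unshiftS y.1.1 y.1.2, unshiftT y.1.2), by
    intro x hx
    rw [mem_unshiftS] at hx
    rcases hx with ⟨h, -⟩ | ⟨rfl, -⟩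
    · exact h
    · omega⟩

lemma unshift_shift (y : P2) : unshiftF (shiftF y) = y := by
  obtain ⟨⟨S, T⟩, hS⟩ := y
  apply Subtype.ext
  have hSmem : ∀ x, x ∈ shiftS S ↔ 0 < x ∧ x + 1 ∈ S := fun x => mem_shiftS hS
  show (unshiftS (shiftS S) (shiftT S T), unshiftT (shiftT S T)) = (S, T)
  have e1 : unshiftS (shiftS S) (shiftT S T) = S := by
    ext x
    rw [mem_unshiftS]
    constructor
    · rintro (⟨hx, hxS⟩ | ⟨rfl, h0⟩)
      · rw [hSmem] at hxS
        have : x - 1 + 1 = x := by omega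
        rw [this] at hxS
        exact hxS.2
      · rw [mem_shiftT] at h0
        push_neg at h0
        by_contra h1
        exact h1 (h0.2 rfl)
    · intro hxS
      have hx : 0 < x := hS x hxS
      by_cases h1 : x = 1
      · subst h1
        right
        refine ⟨rfl, ?_⟩
        rw [mem_shiftT]
        rintro (⟨h, -⟩ | ⟨-, h⟩)
        · omega
        · exact h hxS
      · left
        refine ⟨hx, ?_⟩
        rw [hSmem]
        have : x - 1 + 1 = x := by omega
        constructor
        · omega
        · rw [this]; exact hxS
  have e2 : unshiftT (shiftT S T) = T := by
    ext x
    rw [mem_unshiftT, mem_shiftT]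
    constructor
    · rintro (⟨-, h⟩ | ⟨h, -⟩)
      · simpa using h
      · omega
    · intro h
      left
      exact ⟨by omega, by simpa using h⟩
  rw [e1, e2]

lemma shift_unshift (y : P2) : shiftF (unshiftF y) = y := by
  obtain ⟨⟨S, T⟩, hS⟩ := y
  apply Subtype.ext
  show (shiftS (unshiftS S T), shiftT (unshiftS S T) (unshiftT T)) = (S, T)
  have husPos : PosF (unshiftS S T) := by
    intro x hx
    rw [mem_unshiftS] at hx
    rcases hx with ⟨h, -⟩ | ⟨rfl, -⟩
    · exact h
    · omega
  have e1 : shiftS (unshiftS S T) = S := by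
    ext x
    rw [mem_shiftS husPos, mem_unshiftS]
    constructor
    · rintro ⟨hx, (⟨-, h⟩ | ⟨h, -⟩)⟩
      · simpa using h
      · omega
    · intro hxS
      refine ⟨hS x hxS, Or.inl ⟨by omega, by simpa using hxS⟩⟩
  have e2 : shiftT (unshiftS S T) (unshiftT T) = T := by
    ext x
    rw [mem_shiftT, mem_unshiftT]
    constructor
    · rintro (⟨hx, h⟩ | ⟨rfl, h⟩)
      · have : x - 1 + 1 = x := by omega
        rwa [this] at h
      · rw [mem_unshiftS] at h
        push_neg at h
        by_contra h0
        exact h0 (h.2 rfl)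
    · intro hxT
      by_cases hx : x = 0
      · subst hx
        right
        refine ⟨rfl, ?_⟩
        rw [mem_unshiftS]
        rintro (⟨-, h⟩ | ⟨-, h⟩)
        · have := hS _ h
          omega
        · exact h hxT
      · left
        refine ⟨by omega, ?_⟩
        have : x - 1 + 1 = x := by omega
        rw [this]
        exact hxT
  rw [e1, e2]

def shiftE : Equiv.Perm P2 :=
  ⟨shiftF, unshiftF, unshift_shift, shift_unshift⟩

end Aux

namespace Aux
open Finset

lemma erase_ge_two {S : Finset ℕ} (hS : PosF S) : ∀ x ∈ S.erase 1, 2 ≤ x := by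
  intro x hx
  rw [mem_erase] at hx
  have := hS x hx.2
  omega

lemma card_shiftS {S : Finset ℕ} (hS : PosF S) : (shiftS S).card = (S.erase 1).card := by
  apply Finset.card_image_of_injOn
  intro a ha b hb hab
  have := erase_ge_two hS a ha
  have := erase_ge_two hS b hb
  simp only at hab
  omega

lemma sum_shiftS {S : Finset ℕ} (hS : PosF S) :
    (shiftS S).sum id + (S.erase 1).card = (S.erase 1).sum id := by
  have h1 : (shiftS S).sum id = (S.erase 1).sum (· - 1) := by
    apply Finset.sum_image
    intro a ha b hb hab
    have := erase_ge_two hS a ha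
    have := erase_ge_two hS b hb
    simp only at hab
    omega
  rw [h1, Finset.card_eq_sum_ones, ← Finset.sum_add_distrib]
  apply Finset.sum_congr rfl
  intro x hx
  have := erase_ge_two hS x hx
  simp only [id]
  omega

lemma zero_not_mem_imageadd (T : Finset ℕ) : 0 ∉ T.image (· + 1) := by
  simp

lemma card_shiftT (S T : Finset ℕ) :
    (shiftT S T).card = T.card + (if 1 ∈ S then 0 else 1) := by
  rw [shiftT]
  by_cases h : 1 ∈ S
  · rw [if_pos h, if_pos h, Finset.union_empty, Finset.card_image_of_injective _
      (add_left_injective 1)]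
    omega
  · rw [if_neg h, if_neg h, Finset.card_union_of_disjoint
      (by simp only [Finset.disjoint_singleton_right]; exact zero_not_mem_imageadd T),
      Finset.card_image_of_injective _ (add_left_injective 1)]
    simp

lemma sum_shiftT (S T : Finset ℕ) :
    (shiftT S T).sum id = T.sum id + T.card := by
  have h1 : (T.image (· + 1)).sum id = T.sum id + T.card := by
    rw [Finset.sum_image (by intro a _ b _ h; simpa using h)]
    simp only [id_eq]
    rw [Finset.card_eq_sum_ones, ← Finset.sum_add_distrib]
  rw [shiftT]
  by_cases h : 1 ∈ S
  · rw [if_pos h, Finset.union_empty, h1]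
  · rw [if_neg h, Finset.sum_union (by simp), h1]
    simp

lemma chg_shiftF (y : P2) : chg (shiftF y) = chg y - 1 := by
  obtain ⟨⟨S, T⟩, hS⟩ := y
  have hPos : PosF S := hS
  show (((shiftS S).card : ℤ) - ((shiftT S T).card : ℤ)) = ((S.card : ℤ) - T.card) - 1
  rw [card_shiftS hPos, card_shiftT]
  by_cases h : 1 ∈ S
  · rw [if_pos h, Finset.card_erase_of_mem h]
    have : 0 < S.card := Finset.card_pos.2 ⟨1, h⟩
    omega
  · rw [if_neg h, Finset.erase_eq_of_notMem h]
    omega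

lemma wt2_shiftF (y : P2) : (wt2 (shiftF y) : ℤ) = wt2 y - chg y := by
  obtain ⟨⟨S, T⟩, hS⟩ := y
  have hPos : PosF S := hS
  show (((shiftS S).sum id + (shiftT S T).sum id : ℕ) : ℤ)
      = ((S.sum id + T.sum id : ℕ) : ℤ) - ((S.card : ℤ) - T.card)
  have h1 := sum_shiftS hPos
  have h2 := sum_shiftT S T
  by_cases h : 1 ∈ S
  · have he : (S.erase 1).sum id + 1 = S.sum id := by
      have := Finset.sum_erase_add S id h
      simpa using this
    have hc : (S.erase 1).card = S.card - 1 := Finset.card_erase_of_mem h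
    have : 0 < S.card := Finset.card_pos.2 ⟨1, h⟩
    have hcard_le : S.card ≤ S.sum id := by
      have := Finset.card_nsmul_le_sum S id 1 (fun x hx => hS x hx)
      simpa using this
    omega
  · have he : (S.erase 1).sum id = S.sum id := by rw [Finset.erase_eq_of_notMem h]
    have hc : (S.erase 1).card = S.card := by rw [Finset.erase_eq_of_notMem h]
    have hcard_le : S.card ≤ S.sum id := by
      have := Finset.card_nsmul_le_sum S id 1 (fun x hx => hS x hx)
      simpa using this
    omega

lemma shiftE_apply (y : P2) : shiftE y = shiftF y := rfl
lemma shiftE_inv_apply (y : P2) : shiftE⁻¹ y = unshiftF y := rfl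

lemma chg_unshiftF (y : P2) : chg (unshiftF y) = chg y + 1 := by
  have h := chg_shiftF (unshiftF y)
  rw [show shiftF (unshiftF y) = y from shift_unshift y] at h
  omega

lemma wt2_unshiftF (y : P2) : (wt2 (unshiftF y) : ℤ) = wt2 y + chg y + 1 := by
  have h := wt2_shiftF (unshiftF y)
  rw [show shiftF (unshiftF y) = y from shift_unshift y] at h
  have h2 := chg_unshiftF y
  rw [h2] at h
  omega

lemma chg_pow (m : ℕ) (y : P2) : chg ((shiftE ^ m) y) = chg y - m := by
  induction m generalizing y with
  | zero => simp
  | succ k ih =>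
      rw [pow_succ, Equiv.Perm.mul_apply, shiftE_apply, ih (shiftF y), chg_shiftF]
      push_cast
      ring

lemma chg_invpow (m : ℕ) (y : P2) : chg ((shiftE⁻¹ ^ m) y) = chg y + m := by
  induction m generalizing y with
  | zero => simp
  | succ k ih =>
      rw [pow_succ, Equiv.Perm.mul_apply, shiftE_inv_apply, ih (unshiftF y), chg_unshiftF]
      push_cast
      ring

lemma wt2_pow (m : ℕ) (y : P2) (h : chg y = m) :
    (wt2 ((shiftE ^ m) y) : ℤ) = wt2 y - Tn m := by
  induction m generalizing y with
  | zero => simp [Tn]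
  | succ k ih =>
      rw [pow_succ, Equiv.Perm.mul_apply, shiftE_apply]
      have hc : chg (shiftF y) = k := by rw [chg_shiftF, h]; push_cast; ring
      rw [ih (shiftF y) hc, wt2_shiftF, h, Tn_succ]
      push_cast
      ring

lemma wt2_invpow (m : ℕ) (y : P2) (h : chg y = -(m : ℤ)) :
    (wt2 ((shiftE⁻¹ ^ m) y) : ℤ) = wt2 y - Tn m + m := by
  induction m generalizing y with
  | zero => simp [Tn]
  | succ k ih =>
      rw [pow_succ, Equiv.Perm.mul_apply, shiftE_inv_apply]
      have hc : chg (unshiftF y) = -(k : ℤ) := by rw [chg_unshiftF, h]; push_cast; ring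
      have hw := wt2_unshiftF y
      rw [h] at hw
      rw [ih (unshiftF y) hc, hw, Tn_succ]
      push_cast
      ring

end Aux

namespace Aux
open Finset

def GT (M : ℕ) : Type :=
  {t : Finset ℕ × P2 // PosF t.1 ∧ chg t.2 = 0 ∧ t.1.sum id + wt2 t.2 = M}

def GTj (n j : ℕ) : Type :=
  {t : Finset ℕ × P2 // PosF t.1 ∧ chg t.2 = 0 ∧ t.1.sum id + wt2 t.2 + Tn j = n}

lemma pow_inv_cancel (j : ℕ) (z : P2) : (shiftE ^ j) ((shiftE⁻¹ ^ j) z) = z := by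
  rw [inv_pow]
  exact Equiv.apply_symm_apply _ _

lemma inv_pow_cancel (j : ℕ) (z : P2) : (shiftE⁻¹ ^ j) ((shiftE ^ j) z) = z := by
  rw [inv_pow]
  exact Equiv.symm_apply_apply _ _

lemma Tn_pred (m : ℕ) (hm : 1 ≤ m) : Tn m = Tn (m - 1) + m := by
  obtain ⟨m', rfl⟩ : ∃ m', m = m' + 1 := ⟨m - 1, by omega⟩
  rw [Tn_succ]
  simp

noncomputable def triBToSig (n : ℕ) : TriB n → Σ j : Fin (n+1), GTj n j := fun t =>
  if h : 0 ≤ chg t.1.2 then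
    ⟨⟨(chg t.1.2).toNat, by
      have hsum : t.1.1.sum id + wt2 t.1.2 = n := t.2.2.2
      have hj : ((chg t.1.2).toNat : ℤ) = chg t.1.2 := Int.toNat_of_nonneg h
      have hw := wt2_pow (chg t.1.2).toNat t.1.2 (by omega)
      have := le_Tn (chg t.1.2).toNat
      omega⟩,
    ⟨(t.1.1, (shiftE ^ (chg t.1.2).toNat) t.1.2), by
      have hsum : t.1.1.sum id + wt2 t.1.2 = n := t.2.2.2
      have hA : PosF t.1.1 := t.2.1
      have hj : ((chg t.1.2).toNat : ℤ) = chg t.1.2 := Int.toNat_of_nonneg h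
      have hw := wt2_pow (chg t.1.2).toNat t.1.2 (by omega)
      have hc := chg_pow (chg t.1.2).toNat t.1.2
      refine ⟨hA, ?_, ?_⟩
      · show chg ((shiftE ^ (chg t.1.2).toNat) t.1.2) = 0
        omega
      · show t.1.1.sum id + wt2 ((shiftE ^ (chg t.1.2).toNat) t.1.2)
            + Tn ((chg t.1.2).toNat) = n
        omega⟩⟩
  else
    ⟨⟨(-(chg t.1.2)).toNat - 1, by
      have hsum : t.1.1.sum id + wt2 t.1.2 = n := t.2.2.2
      have hj : (((-(chg t.1.2)).toNat : ℤ)) = -(chg t.1.2) := Int.toNat_of_nonneg (by omega)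
      have hw := wt2_invpow (-(chg t.1.2)).toNat t.1.2 (by omega)
      have h1 := le_Tn ((-(chg t.1.2)).toNat - 1)
      have hm1 : 1 ≤ (-(chg t.1.2)).toNat := by omega
      have hTn := Tn_pred _ hm1
      omega⟩,
    ⟨(t.1.1, (shiftE⁻¹ ^ ((-(chg t.1.2)).toNat)) t.1.2), by
      have hsum : t.1.1.sum id + wt2 t.1.2 = n := t.2.2.2
      have hA : PosF t.1.1 := t.2.1
      have hj : (((-(chg t.1.2)).toNat : ℤ)) = -(chg t.1.2) := Int.toNat_of_nonneg (by omega)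
      have hw := wt2_invpow (-(chg t.1.2)).toNat t.1.2 (by omega)
      have hc := chg_invpow (-(chg t.1.2)).toNat t.1.2
      have hm1 : 1 ≤ (-(chg t.1.2)).toNat := by omega
      have hTn := Tn_pred _ hm1
      refine ⟨hA, ?_, ?_⟩
      · show chg ((shiftE⁻¹ ^ ((-(chg t.1.2)).toNat)) t.1.2) = 0
        omega
      · show t.1.1.sum id + wt2 ((shiftE⁻¹ ^ ((-(chg t.1.2)).toNat)) t.1.2)
            + Tn ((-(chg t.1.2)).toNat - 1) = n
        omega⟩⟩

noncomputable def sigToTriB (n : ℕ) : (Σ j : Fin (n+1), GTj n j) → TriB n := fun x =>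
  if h : Odd (x.1 : ℕ) then
    ⟨(x.2.1.1, (shiftE⁻¹ ^ (x.1 : ℕ)) x.2.1.2), by
      have hsum : x.2.1.1.sum id + wt2 x.2.1.2 + Tn (x.1 : ℕ) = n := x.2.2.2.2
      have hA : PosF x.2.1.1 := x.2.2.1
      have hc0 : chg x.2.1.2 = 0 := x.2.2.2.1
      have hc := chg_invpow (x.1 : ℕ) x.2.1.2
      have hw := wt2_pow (x.1 : ℕ) ((shiftE⁻¹ ^ (x.1 : ℕ)) x.2.1.2) (by omega)
      rw [pow_inv_cancel] at hw
      refine ⟨hA, ?_, ?_⟩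
      · rw [hc, hc0]
        obtain ⟨k, hk⟩ := h
        exact ⟨(k : ℤ), by push_cast; omega⟩
      · show x.2.1.1.sum id + wt2 ((shiftE⁻¹ ^ (x.1 : ℕ)) x.2.1.2) = n
        omega⟩
  else
    ⟨(x.2.1.1, (shiftE ^ ((x.1 : ℕ) + 1)) x.2.1.2), by
      have hsum : x.2.1.1.sum id + wt2 x.2.1.2 + Tn (x.1 : ℕ) = n := x.2.2.2.2
      have hA : PosF x.2.1.1 := x.2.2.1
      have hc0 : chg x.2.1.2 = 0 := x.2.2.2.1
      have hc := chg_pow ((x.1 : ℕ) + 1) x.2.1.2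
      have hw := wt2_invpow ((x.1 : ℕ) + 1) ((shiftE ^ ((x.1 : ℕ) + 1)) x.2.1.2)
        (by rw [hc, hc0]; push_cast; omega)
      rw [inv_pow_cancel] at hw
      refine ⟨hA, ?_, ?_⟩
      · rw [hc, hc0]
        rw [Nat.odd_iff] at h
        have h2 : ((x.1 : ℕ) : ℤ) % 2 = 0 := by omega
        refine ⟨-((x.1 : ℕ) : ℤ)/2 - 1, by omega⟩
      · show x.2.1.1.sum id + wt2 ((shiftE ^ ((x.1 : ℕ) + 1)) x.2.1.2) = n
        rw [Tn_succ] at hw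
        omega⟩

lemma triB_ext {n : ℕ} {x y : TriB n} (h1 : x.1.1 = y.1.1) (h2 : x.1.2 = y.1.2) : x = y := by
  apply Subtype.ext
  exact Prod.ext h1 h2

lemma sigma_gtj_ext {n : ℕ} {x y : Σ j : Fin (n+1), GTj n j}
    (h1 : (x.1 : ℕ) = (y.1 : ℕ)) (h2 : x.2.1 = y.2.1) : x = y := by
  obtain ⟨⟨j, hj⟩, b⟩ := x
  obtain ⟨⟨j', hj'⟩, b'⟩ := y
  simp only at h1
  subst h1
  have : b = b' := Subtype.ext h2
  subst this
  rfl

noncomputable def triBSigEquiv (n : ℕ) : TriB n ≃ Σ j : Fin (n+1), GTj n j where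
  toFun := triBToSig n
  invFun := sigToTriB n
  left_inv t := by
    have hodd : Odd (chg t.1.2) := t.2.2.1
    by_cases h : 0 ≤ chg t.1.2
    · simp only [triBToSig]
      rw [dif_pos h]
      have hoddn : Odd ((chg t.1.2).toNat) := by
        rcases hodd with ⟨k, hk⟩
        rw [Nat.odd_iff]
        omega
      simp only [sigToTriB]
      erw [dif_pos hoddn]
      exact triB_ext rfl (inv_pow_cancel _ _)
    · simp only [triBToSig]
      rw [dif_neg h]
      have hm1 : 1 ≤ (-(chg t.1.2)).toNat := by omega
      have hoddn : ¬ Odd ((-(chg t.1.2)).toNat - 1) := by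
        rcases hodd with ⟨k, hk⟩
        rw [Nat.odd_iff]
        omega
      simp only [sigToTriB]
      erw [dif_neg hoddn]
      have hexp : (-(chg t.1.2)).toNat - 1 + 1 = (-(chg t.1.2)).toNat := by omega
      refine triB_ext rfl ?_
      show (shiftE ^ ((-(chg t.1.2)).toNat - 1 + 1)) ((shiftE⁻¹ ^ ((-(chg t.1.2)).toNat)) t.1.2)
          = t.1.2
      rw [hexp, pow_inv_cancel]
  right_inv x := by
    have hc0 : chg x.2.1.2 = 0 := x.2.2.2.1
    by_cases h : Odd (x.1 : ℕ)
    · simp only [sigToTriB]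
      erw [dif_pos h]
      have hcz : chg ((shiftE⁻¹ ^ (x.1 : ℕ)) x.2.1.2) = (x.1 : ℕ) := by
        rw [chg_invpow, hc0]
        omega
      simp only [triBToSig]
      rw [dif_pos (by rw [hcz]; positivity)]
      apply sigma_gtj_ext
      · show ((chg ((shiftE⁻¹ ^ (x.1 : ℕ)) x.2.1.2)).toNat : ℕ) = (x.1 : ℕ)
        rw [hcz]
        omega
      · show ((x.2.1.1, _) : Finset ℕ × P2) = x.2.1
        have hT : (chg ((shiftE⁻¹ ^ (x.1 : ℕ)) x.2.1.2)).toNat = (x.1 : ℕ) := by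
          rw [hcz]; omega
        refine Prod.ext rfl ?_
        show (shiftE ^ (chg ((shiftE⁻¹ ^ (x.1 : ℕ)) x.2.1.2)).toNat)
            ((shiftE⁻¹ ^ (x.1 : ℕ)) x.2.1.2) = x.2.1.2
        rw [hT, pow_inv_cancel]
    · simp only [sigToTriB]
      erw [dif_neg h]
      have hcz : chg ((shiftE ^ ((x.1 : ℕ) + 1)) x.2.1.2) = -(((x.1 : ℕ) : ℤ) + 1) := by
        rw [chg_pow, hc0]
        push_cast
        omega
      simp only [triBToSig]
      rw [dif_neg (by rw [hcz]; omega)]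
      have hT : (-(chg ((shiftE ^ ((x.1 : ℕ) + 1)) x.2.1.2))).toNat = (x.1 : ℕ) + 1 := by
        rw [hcz]; omega
      apply sigma_gtj_ext
      · show ((-(chg ((shiftE ^ ((x.1 : ℕ) + 1)) x.2.1.2))).toNat - 1 : ℕ) = (x.1 : ℕ)
        rw [hT]
        omega
      · show ((x.2.1.1, _) : Finset ℕ × P2) = x.2.1
        refine Prod.ext rfl ?_
        show (shiftE⁻¹ ^ (-(chg ((shiftE ^ ((x.1 : ℕ) + 1)) x.2.1.2))).toNat)
            ((shiftE ^ ((x.1 : ℕ) + 1)) x.2.1.2) = x.2.1.2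
        rw [hT, inv_pow_cancel]

end Aux

namespace Aux
open Finset

lemma finite_ABP (n : ℕ) (Q : Finset ℕ × P2 → Prop)
    (hb : ∀ t, Q t → t.1.sum id + wt2 t.2 ≤ n) : Finite {t // Q t} := by
  have hinj : Function.Injective (fun (t : {t // Q t}) =>
      (encF n t.1.1, encF n t.1.2.1.1, encF n t.1.2.1.2)) := by
    intro t t' h
    simp only [Prod.mk.injEq] at h
    obtain ⟨h1, h2, h3⟩ := h
    have hbt := hb t.1 t.2
    have hbt' := hb t'.1 t'.2
    have hA : t.1.1 = t'.1.1 := by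
      apply encF_inj (n := n) _ _ h1
      · intro x hx
        have := mem_le_sum hx
        omega
      · intro x hx
        have := mem_le_sum hx
        omega
    have hS : t.1.2.1.1 = t'.1.2.1.1 := by
      apply encF_inj (n := n) _ _ h2
      · intro x hx
        have := mem_le_sum hx
        have : wt2 t.1.2 = t.1.2.1.1.sum id + t.1.2.1.2.sum id := rfl
        omega
      · intro x hx
        have := mem_le_sum hx
        have : wt2 t'.1.2 = t'.1.2.1.1.sum id + t'.1.2.1.2.sum id := rfl
        omega
    have hT : t.1.2.1.2 = t'.1.2.1.2 := by
      apply encF_inj (n := n) _ _ h3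
      · intro x hx
        have := mem_le_sum hx
        have : wt2 t.1.2 = t.1.2.1.1.sum id + t.1.2.1.2.sum id := rfl
        omega
      · intro x hx
        have := mem_le_sum hx
        have : wt2 t'.1.2 = t'.1.2.1.1.sum id + t'.1.2.1.2.sum id := rfl
        omega
    apply Subtype.ext
    exact Prod.ext hA (Subtype.ext (Prod.ext hS hT))
  exact Finite.of_injective _ hinj

instance GT_finite (M : ℕ) : Finite (GT M) :=
  finite_ABP M _ (fun t ht => by rw [ht.2.2])

instance GTj_finite (n j : ℕ) : Finite (GTj n j) :=
  finite_ABP n _ (fun t ht => by have := ht.2.2; omega)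

instance TriB_finite (n : ℕ) : Finite (TriB n) :=
  finite_ABP n _ (fun t ht => by rw [ht.2.2])

lemma card_TriB_sum (n : ℕ) :
    Nat.card (TriB n) = ∑ j ∈ Finset.range (n+1), Nat.card (GTj n j) := by
  rw [Nat.card_congr (triBSigEquiv n)]
  haveI : ∀ j : ℕ, Fintype (GTj n j) := fun j => @Fintype.ofFinite _ (GTj_finite n j)
  rw [Nat.card_eq_fintype_card, Fintype.card_sigma]
  rw [Fin.sum_univ_eq_sum_range (fun j => Fintype.card (GTj n j))]
  apply Finset.sum_congr rfl
  intro j _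
  rw [Nat.card_eq_fintype_card]

lemma card_GTj_of_le {n j : ℕ} (h : Tn j ≤ n) :
    Nat.card (GTj n j) = Nat.card (GT (n - Tn j)) := by
  apply Nat.card_congr
  apply Equiv.subtypeEquivRight
  intro t
  constructor
  · rintro ⟨h1, h2, h3⟩
    exact ⟨h1, h2, by omega⟩
  · rintro ⟨h1, h2, h3⟩
    exact ⟨h1, h2, by omega⟩

lemma card_GTj_of_gt {n j : ℕ} (h : n < Tn j) : Nat.card (GTj n j) = 0 := by
  have : IsEmpty (GTj n j) := by
    constructor
    rintro ⟨t, -, -, h3⟩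
    omega
  simp [Nat.card_of_isEmpty]

/-- conjugation on pairs -/
def conjP : P2 → P2 := fun y =>
  ⟨(y.1.2.image (· + 1), y.1.1.image (· - 1)), by
    intro x hx
    rw [Finset.mem_image] at hx
    obtain ⟨t, -, rfl⟩ := hx
    omega⟩

lemma conj_conj (y : P2) : conjP (conjP y) = y := by
  obtain ⟨⟨S, T⟩, hS⟩ := y
  apply Subtype.ext
  show ((S.image (· - 1)).image (· + 1), (T.image (· + 1)).image (· - 1)) = (S, T)
  have e1 : (S.image (· - 1)).image (· + 1) = S := by
    ext x
    simp only [Finset.mem_image]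
    constructor
    · rintro ⟨z, ⟨s, hs, rfl⟩, rfl⟩
      have := hS s hs
      have : s - 1 + 1 = s := by omega
      rwa [this]
    · intro hx
      exact ⟨x - 1, ⟨x, hx, rfl⟩, by have := hS x hx; omega⟩
  have e2 : (T.image (· + 1)).image (· - 1) = T := by
    ext x
    simp only [Finset.mem_image]
    constructor
    · rintro ⟨z, ⟨t, ht, rfl⟩, rfl⟩
      simpa using ht
    · intro hx
      exact ⟨x + 1, ⟨x, hx, rfl⟩, by omega⟩
  rw [e1, e2]

lemma card_image_sub_one {S : Finset ℕ} (hS : PosF S) : (S.image (· - 1)).card = S.card := by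
  apply Finset.card_image_of_injOn
  intro a ha b hb hab
  have hab' : a - 1 = b - 1 := hab
  have := hS a ha
  have := hS b hb
  omega

lemma sum_image_sub_one {S : Finset ℕ} (hS : PosF S) :
    (S.image (· - 1)).sum id + S.card = S.sum id := by
  have hinj : ∀ a ∈ S, ∀ b ∈ S, a - 1 = b - 1 → a = b := by
    intro a ha b hb hab
    have := hS a ha
    have := hS b hb
    omega
  rw [Finset.sum_image hinj]
  simp only [id_eq]
  rw [Finset.card_eq_sum_ones, ← Finset.sum_add_distrib]
  apply Finset.sum_congr rfl
  intro x hx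
  have := hS x hx
  omega

lemma card_image_add_one (T : Finset ℕ) : (T.image (· + 1)).card = T.card :=
  Finset.card_image_of_injective _ (add_left_injective 1)

lemma sum_image_add_one (T : Finset ℕ) : (T.image (· + 1)).sum id = T.sum id + T.card := by
  rw [Finset.sum_image (by intro a _ b _ h; simpa using h)]
  simp only [id_eq]
  rw [Finset.card_eq_sum_ones, ← Finset.sum_add_distrib]

lemma chg_conjP (y : P2) : chg (conjP y) = - chg y := by
  obtain ⟨⟨S, T⟩, hS⟩ := y
  show ((T.image (· + 1)).card : ℤ) - ((S.image (· - 1)).card : ℤ) = -(((S.card : ℤ)) - T.card)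
  rw [card_image_sub_one hS, card_image_add_one]
  ring

lemma wt2_conjP (y : P2) : (wt2 (conjP y) : ℤ) = wt2 y - chg y := by
  obtain ⟨⟨S, T⟩, hS⟩ := y
  show (((T.image (· + 1)).sum id + (S.image (· - 1)).sum id : ℕ) : ℤ)
    = ((S.sum id + T.sum id : ℕ) : ℤ) - ((S.card : ℤ) - T.card)
  have hS' : PosF S := hS
  have h1 := sum_image_sub_one hS'
  have h2 := sum_image_add_one T
  omega

/-- the involution on `GT M` given by conjugation on the pair part -/
def conjGT (M : ℕ) : Equiv.Perm (GT M) where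
  toFun t := ⟨(t.1.1, conjP t.1.2), by
    obtain ⟨⟨A, y⟩, hA, hc, hsum⟩ := t
    refine ⟨hA, ?_, ?_⟩
    · show chg (conjP y) = 0
      rw [chg_conjP, hc]
      ring
    · show A.sum id + wt2 (conjP y) = M
      have hw := wt2_conjP y
      have hsum' : A.sum id + wt2 y = M := hsum
      have hc' : chg y = 0 := hc
      rw [hc'] at hw
      omega⟩
  invFun t := ⟨(t.1.1, conjP t.1.2), by
    obtain ⟨⟨A, y⟩, hA, hc, hsum⟩ := t
    refine ⟨hA, ?_, ?_⟩
    · show chg (conjP y) = 0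
      rw [chg_conjP, hc]
      ring
    · show A.sum id + wt2 (conjP y) = M
      have hw := wt2_conjP y
      have hsum' : A.sum id + wt2 y = M := hsum
      have hc' : chg y = 0 := hc
      rw [hc'] at hw
      omega⟩
  left_inv t := by
    apply Subtype.ext
    show (t.1.1, conjP (conjP t.1.2)) = t.1
    rw [conj_conj]
  right_inv t := by
    apply Subtype.ext
    show (t.1.1, conjP (conjP t.1.2)) = t.1
    rw [conj_conj]

lemma conjGT_sq (M : ℕ) : (conjGT M) ^ 2 = 1 := by
  apply Equiv.ext
  intro t
  rw [pow_two, Equiv.Perm.mul_apply, Equiv.Perm.one_apply]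
  apply Subtype.ext
  show (t.1.1, conjP (conjP t.1.2)) = t.1
  rw [conj_conj]

end Aux

namespace Aux
open Finset

def C1T (M : ℕ) : Type :=
  {t : Finset ℕ × Finset ℕ // PosF t.1 ∧ OddF t.2 ∧ t.1.sum id + t.2.sum id = M}

def E1 (M : ℕ) : Type :=
  {t : Finset ℕ × Finset ℕ × Finset ℕ // PosF t.1 ∧ OddF t.2.1 ∧ OddF t.2.2 ∧
    2 * t.1.sum id + t.2.1.sum id + t.2.2.sum id = M}

instance C1T_finite (M : ℕ) : Finite (C1T M) := by
  have hinj : Function.Injective (fun (t : C1T M) => (encF M t.1.1, encF M t.1.2)) := by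
    intro t t' h
    simp only [Prod.mk.injEq] at h
    obtain ⟨h1, h2⟩ := h
    have hb := t.2.2.2
    have hb' := t'.2.2.2
    have hA : t.1.1 = t'.1.1 := by
      apply encF_inj (n := M) _ _ h1 <;> intro x hx <;> have := mem_le_sum hx <;> omega
    have hO : t.1.2 = t'.1.2 := by
      apply encF_inj (n := M) _ _ h2 <;> intro x hx <;> have := mem_le_sum hx <;> omega
    exact Subtype.ext (Prod.ext hA hO)
  exact Finite.of_injective _ hinj

instance E1_finite (M : ℕ) : Finite (E1 M) := by
  have hinj : Function.Injective
      (fun (t : E1 M) => (encF M t.1.1, encF M t.1.2.1, encF M t.1.2.2)) := by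
    intro t t' h
    simp only [Prod.mk.injEq] at h
    obtain ⟨h1, h2, h3⟩ := h
    have hb := t.2.2.2.2
    have hb' := t'.2.2.2.2
    have hA : t.1.1 = t'.1.1 := by
      apply encF_inj (n := M) _ _ h1 <;> intro x hx <;> have := mem_le_sum hx <;> omega
    have hO1 : t.1.2.1 = t'.1.2.1 := by
      apply encF_inj (n := M) _ _ h2 <;> intro x hx <;> have := mem_le_sum hx <;> omega
    have hO2 : t.1.2.2 = t'.1.2.2 := by
      apply encF_inj (n := M) _ _ h3 <;> intro x hx <;> have := mem_le_sum hx <;> omega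
    exact Subtype.ext (Prod.ext hA (Prod.ext hO1 hO2))
  exact Finite.of_injective _ hinj

lemma image_add_sub (T : Finset ℕ) : (T.image (· + 1)).image (· - 1) = T := by
  ext x
  simp only [Finset.mem_image]
  constructor
  · rintro ⟨z, ⟨t, ht, rfl⟩, rfl⟩
    simpa using ht
  · intro hx
    exact ⟨x + 1, ⟨x, hx, rfl⟩, by omega⟩

lemma image_oddify_halve (T : Finset ℕ) : ((T.image (fun t => 2*t+1)).image (· / 2)) = T := by
  ext x
  simp only [Finset.mem_image]
  constructor
  · rintro ⟨z, ⟨t, ht, rfl⟩, rfl⟩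
    have : (2*t+1)/2 = t := by omega
    rwa [this]
  · intro hx
    exact ⟨2*x+1, ⟨x, hx, rfl⟩, by omega⟩

lemma image_halve_oddify {O : Finset ℕ} (hO : OddF O) :
    ((O.image (· / 2)).image (fun t => 2*t+1)) = O := by
  ext x
  simp only [Finset.mem_image]
  constructor
  · rintro ⟨z, ⟨o, ho, rfl⟩, rfl⟩
    have := hO o ho
    have : 2*(o/2)+1 = o := by omega
    rwa [this]
  · intro hx
    have := hO x hx
    exact ⟨x / 2, ⟨x, hx, rfl⟩, by omega⟩

lemma sum_image_oddify (T : Finset ℕ) :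
    (T.image (fun t => 2*t+1)).sum id = 2 * T.sum id + T.card := by
  have hinj : ∀ a ∈ T, ∀ b ∈ T, 2*a+1 = 2*b+1 → a = b := by
    intro a _ b _ h
    omega
  rw [Finset.sum_image hinj]
  simp only [id_eq]
  rw [Finset.card_eq_sum_ones, Finset.mul_sum, ← Finset.sum_add_distrib]

lemma card_image_halve {O : Finset ℕ} (hO : OddF O) : (O.image (· / 2)).card = O.card := by
  apply Finset.card_image_of_injOn
  intro a ha b hb hab
  have hab' : a / 2 = b / 2 := hab
  have := hO a ha
  have := hO b hb
  omega

lemma sum_image_halve {O : Finset ℕ} (hO : OddF O) :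
    2 * (O.image (· / 2)).sum id + O.card = O.sum id := by
  have hinj : ∀ a ∈ O, ∀ b ∈ O, a / 2 = b / 2 → a = b := by
    intro a ha b hb hab
    have := hO a ha
    have := hO b hb
    omega
  rw [Finset.sum_image hinj]
  simp only [id_eq]
  rw [Finset.card_eq_sum_ones, Finset.mul_sum, ← Finset.sum_add_distrib]
  apply Finset.sum_congr rfl
  intro x hx
  have := hO x hx
  omega

/-- fixed points of the conjugation involution are counted by `C1T` -/
noncomputable def fixedConjEquiv (M : ℕ) :
    {t : GT M // conjGT M t = t} ≃ C1T M where
  toFun t := ⟨(t.1.1.1, t.1.1.2.1.2.image (fun x => 2*x+1)), by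
    obtain ⟨⟨⟨A, y⟩, hA, hc, hsum⟩, hfix⟩ := t
    have hval : ((A, conjP y) : Finset ℕ × P2) = (A, y) :=
      congrArg Subtype.val hfix
    have hy : conjP y = y := (Prod.ext_iff.1 hval).2
    have hS : y.1.2.image (· + 1) = y.1.1 :=
      (Prod.ext_iff.1 (congrArg Subtype.val hy)).1
    refine ⟨hA, ?_, ?_⟩
    · intro x hx
      rw [Finset.mem_image] at hx
      obtain ⟨o, -, rfl⟩ := hx
      omega
    · show A.sum id + (y.1.2.image (fun x => 2*x+1)).sum id = M
      have hsum' : A.sum id + wt2 y = M := hsum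
      have hw : wt2 y = y.1.1.sum id + y.1.2.sum id := rfl
      have h2 : y.1.1.sum id = y.1.2.sum id + y.1.2.card := by
        rw [← hS, sum_image_add_one]
      rw [sum_image_oddify]
      omega⟩
  invFun t := ⟨⟨(t.1.1, ⟨((t.1.2.image (· / 2)).image (· + 1), t.1.2.image (· / 2)), by
      intro x hx
      rw [Finset.mem_image] at hx
      obtain ⟨z, -, rfl⟩ := hx
      omega⟩), by
    obtain ⟨⟨A, O⟩, hA, hO, hsum⟩ := t
    have hO' : OddF O := hO
    refine ⟨hA, ?_, ?_⟩
    · show ((((O.image (· / 2)).image (· + 1)).card : ℤ)) - ((O.image (· / 2)).card : ℤ) = 0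
      rw [card_image_add_one]
      ring
    · show A.sum id + (((O.image (· / 2)).image (· + 1)).sum id + (O.image (· / 2)).sum id) = M
      have hsum' : A.sum id + O.sum id = M := hsum
      have h1 := sum_image_add_one (O.image (· / 2))
      have h2 := sum_image_halve hO'
      have h3 := card_image_halve hO'
      omega⟩, by
    apply Subtype.ext
    show ((t.1.1, conjP _) : Finset ℕ × P2) = _
    refine Prod.ext rfl ?_
    apply Subtype.ext
    show ((t.1.2.image (· / 2)).image (· + 1),
        (((t.1.2.image (· / 2)).image (· + 1)).image (· - 1))) = _
    refine Prod.ext rfl ?_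
    rw [image_add_sub]⟩
  left_inv t := by
    obtain ⟨⟨⟨A, y⟩, hA, hc, hsum⟩, hfix⟩ := t
    have hval : ((A, conjP y) : Finset ℕ × P2) = (A, y) :=
      congrArg Subtype.val hfix
    have hy : conjP y = y := (Prod.ext_iff.1 hval).2
    have hS : y.1.2.image (· + 1) = y.1.1 :=
      (Prod.ext_iff.1 (congrArg Subtype.val hy)).1
    apply Subtype.ext
    apply Subtype.ext
    refine Prod.ext rfl ?_
    apply Subtype.ext
    show (((y.1.2.image (fun x => 2*x+1)).image (· / 2)).image (· + 1),
      ((y.1.2.image (fun x => 2*x+1)).image (· / 2))) = y.1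
    rw [image_oddify_halve]
    rw [hS]
  right_inv t := by
    obtain ⟨⟨A, O⟩, hA, hO, hsum⟩ := t
    apply Subtype.ext
    show (A, ((O.image (· / 2)).image (fun x => 2*x+1))) = (A, O)
    rw [image_halve_oddify hO]

lemma card_GT_modEq_C1T (M : ℕ) : Nat.card (GT M) ≡ Nat.card (C1T M) [MOD 2] := by
  have h := card_modEq_fixed_two (conjGT M) (conjGT_sq M)
  rwa [Nat.card_congr (fixedConjEquiv M)] at h

end Aux

namespace Aux
open Finset

lemma even_filter_sum (A : Finset ℕ) :
    2 * ((A.filter (fun x => x % 2 = 0)).image (· / 2)).sum id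
      = (A.filter (fun x => x % 2 = 0)).sum id := by
  have hinj : ∀ a ∈ A.filter (fun x => x % 2 = 0), ∀ b ∈ A.filter (fun x => x % 2 = 0),
      a / 2 = b / 2 → a = b := by
    intro a ha b hb hab
    rw [Finset.mem_filter] at ha hb
    omega
  rw [Finset.sum_image hinj]
  simp only [id_eq]
  rw [Finset.mul_sum]
  apply Finset.sum_congr rfl
  intro x hx
  rw [Finset.mem_filter] at hx
  omega

lemma twice_image_sum (Ae : Finset ℕ) :
    (Ae.image (fun x => 2 * x)).sum id = 2 * Ae.sum id := by
  have hinj : ∀ a ∈ Ae, ∀ b ∈ Ae, 2 * a = 2 * b → a = b := by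
    intro a _ b _ h
    omega
  rw [Finset.sum_image hinj]
  simp only [id_eq]
  rw [Finset.mul_sum]

noncomputable def c1tToE1 (M : ℕ) : C1T M ≃ E1 M where
  toFun t := ⟨((t.1.1.filter (fun x => x % 2 = 0)).image (· / 2),
      t.1.1.filter (fun x => x % 2 = 1), t.1.2), by
    obtain ⟨⟨A, O⟩, hA, hO, hsum⟩ := t
    have hA' : PosF A := hA
    have hO' : OddF O := hO
    have hsum' : A.sum id + O.sum id = M := hsum
    refine ⟨?_, ?_, hO', ?_⟩
    · intro x hx
      rw [Finset.mem_image] at hx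
      obtain ⟨a, ha, rfl⟩ := hx
      rw [Finset.mem_filter] at ha
      have := hA' a ha.1
      omega
    · intro x hx
      rw [Finset.mem_filter] at hx
      exact hx.2
    · show 2 * ((A.filter (fun x => x % 2 = 0)).image (· / 2)).sum id
        + (A.filter (fun x => x % 2 = 1)).sum id + O.sum id = M
      rw [even_filter_sum]
      have hsplit := Finset.sum_filter_add_sum_filter_not A (fun x => x % 2 = 0) id
      have : A.filter (fun x => ¬ x % 2 = 0) = A.filter (fun x => x % 2 = 1) := by
        apply Finset.filter_congr
        intro x _
        omega
      rw [this] at hsplit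
      have hsplit' : (A.filter (fun x => x % 2 = 0)).sum id
          + (A.filter (fun x => x % 2 = 1)).sum id = A.sum id := hsplit
      omega⟩
  invFun t := ⟨(t.1.1.image (fun x => 2 * x) ∪ t.1.2.1, t.1.2.2), by
    obtain ⟨⟨Ae, Ao, O⟩, hAe, hAo, hO, hsum⟩ := t
    have hAe' : PosF Ae := hAe
    have hAo' : OddF Ao := hAo
    have hsum' : 2 * Ae.sum id + Ao.sum id + O.sum id = M := hsum
    have hdisj : Disjoint (Ae.image (fun x => 2 * x)) Ao := by
      rw [Finset.disjoint_left]
      intro a ha ha'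
      rw [Finset.mem_image] at ha
      obtain ⟨z, -, rfl⟩ := ha
      have := hAo' _ ha'
      omega
    refine ⟨?_, hO, ?_⟩
    · intro x hx
      rw [Finset.mem_union] at hx
      rcases hx with hx | hx
      · rw [Finset.mem_image] at hx
        obtain ⟨z, hz, rfl⟩ := hx
        have := hAe' z hz
        omega
      · have := hAo' x hx
        omega
    · show (Ae.image (fun x => 2 * x) ∪ Ao).sum id + O.sum id = M
      rw [Finset.sum_union hdisj, twice_image_sum]
      have hAo2 : (∑ x ∈ Ao, id x) = Ao.sum id := rfl
      rw [hAo2]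
      omega⟩
  left_inv t := by
    obtain ⟨⟨A, O⟩, hA, hO, hsum⟩ := t
    have hA' : PosF A := hA
    apply Subtype.ext
    show ((((A.filter (fun x => x % 2 = 0)).image (· / 2)).image (fun x => 2 * x)
        ∪ A.filter (fun x => x % 2 = 1), O) : Finset ℕ × Finset ℕ) = (A, O)
    refine Prod.ext ?_ rfl
    ext x
    simp only [Finset.mem_union, Finset.mem_image, Finset.mem_filter]
    constructor
    · rintro (⟨z, ⟨a, ⟨ha, he⟩, rfl⟩, rfl⟩ | ⟨hx, -⟩)
      · have : 2 * (a / 2) = a := by omega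
        rwa [this]
      · exact hx
    · intro hx
      by_cases he : x % 2 = 0
      · exact Or.inl ⟨x / 2, ⟨x, ⟨hx, he⟩, rfl⟩, by omega⟩
      · exact Or.inr ⟨hx, by omega⟩
  right_inv t := by
    obtain ⟨⟨Ae, Ao, O⟩, hAe, hAo, hO, hsum⟩ := t
    have hAe' : PosF Ae := hAe
    have hAo' : OddF Ao := hAo
    apply Subtype.ext
    show ((((Ae.image (fun x => 2 * x) ∪ Ao).filter (fun x => x % 2 = 0)).image (· / 2),
        (Ae.image (fun x => 2 * x) ∪ Ao).filter (fun x => x % 2 = 1), O)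
        : Finset ℕ × Finset ℕ × Finset ℕ) = (Ae, Ao, O)
    refine Prod.ext ?_ (Prod.ext ?_ rfl)
    · ext x
      simp only [Finset.mem_image, Finset.mem_filter, Finset.mem_union]
      constructor
      · rintro ⟨a, ⟨ha | ha, he⟩, rfl⟩
        · obtain ⟨z, hz, rfl⟩ := ha
          have : 2 * z / 2 = z := by omega
          rwa [this]
        · have := hAo' a ha
          omega
      · intro hx
        exact ⟨2 * x, ⟨Or.inl ⟨x, hx, rfl⟩, by omega⟩, by omega⟩
    · ext x
      simp only [Finset.mem_filter, Finset.mem_union, Finset.mem_image]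
      constructor
      · rintro ⟨⟨z, hz, rfl⟩ | hx, he⟩
        · omega
        · exact hx
      · intro hx
        have := hAo' x hx
        exact ⟨Or.inr hx, this⟩

/-- swap involution on E1 -/
def swapE1 (M : ℕ) : Equiv.Perm (E1 M) where
  toFun t := ⟨(t.1.1, t.1.2.2, t.1.2.1), by
    obtain ⟨⟨Ae, Ao, O⟩, hAe, hAo, hO, hsum⟩ := t
    have hsum' : 2 * Ae.sum id + Ao.sum id + O.sum id = M := hsum
    exact ⟨hAe, hO, hAo, by show 2 * Ae.sum id + O.sum id + Ao.sum id = M; omega⟩⟩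
  invFun t := ⟨(t.1.1, t.1.2.2, t.1.2.1), by
    obtain ⟨⟨Ae, Ao, O⟩, hAe, hAo, hO, hsum⟩ := t
    have hsum' : 2 * Ae.sum id + Ao.sum id + O.sum id = M := hsum
    exact ⟨hAe, hO, hAo, by show 2 * Ae.sum id + O.sum id + Ao.sum id = M; omega⟩⟩
  left_inv t := by
    apply Subtype.ext
    show (t.1.1, t.1.2.1, t.1.2.2) = t.1
    rfl
  right_inv t := by
    apply Subtype.ext
    show (t.1.1, t.1.2.1, t.1.2.2) = t.1
    rfl

lemma swapE1_sq (M : ℕ) : (swapE1 M) ^ 2 = 1 := by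
  apply Equiv.ext
  intro t
  rw [pow_two, Equiv.Perm.mul_apply, Equiv.Perm.one_apply]
  apply Subtype.ext
  show (t.1.1, t.1.2.1, t.1.2.2) = t.1
  rfl

def F1 (M : ℕ) : Type :=
  {t : Finset ℕ × Finset ℕ // PosF t.1 ∧ OddF t.2 ∧ 2 * t.1.sum id + 2 * t.2.sum id = M}

noncomputable def fixedSwapEquiv (M : ℕ) : {t : E1 M // swapE1 M t = t} ≃ F1 M where
  toFun t := ⟨(t.1.1.1, t.1.1.2.1), by
    obtain ⟨⟨⟨Ae, Ao, O⟩, hAe, hAo, hO, hsum⟩, hfix⟩ := t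
    have hval : ((Ae, O, Ao) : Finset ℕ × Finset ℕ × Finset ℕ) = (Ae, Ao, O) :=
      congrArg Subtype.val hfix
    have hOA : O = Ao := (Prod.ext_iff.1 (Prod.ext_iff.1 hval).2).1
    have hsum' : 2 * Ae.sum id + Ao.sum id + O.sum id = M := hsum
    refine ⟨hAe, hAo, ?_⟩
    show 2 * Ae.sum id + 2 * Ao.sum id = M
    rw [hOA] at hsum'
    omega⟩
  invFun t := ⟨⟨(t.1.1, t.1.2, t.1.2), by
    obtain ⟨⟨Ae, O⟩, hAe, hO, hsum⟩ := t
    have hsum' : 2 * Ae.sum id + 2 * O.sum id = M := hsum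
    exact ⟨hAe, hO, hO, by show 2 * Ae.sum id + O.sum id + O.sum id = M; omega⟩⟩, by
    apply Subtype.ext
    rfl⟩
  left_inv t := by
    obtain ⟨⟨⟨Ae, Ao, O⟩, hAe, hAo, hO, hsum⟩, hfix⟩ := t
    have hval : ((Ae, O, Ao) : Finset ℕ × Finset ℕ × Finset ℕ) = (Ae, Ao, O) :=
      congrArg Subtype.val hfix
    have hOA : O = Ao := (Prod.ext_iff.1 (Prod.ext_iff.1 hval).2).1
    apply Subtype.ext
    apply Subtype.ext
    show ((Ae, Ao, Ao) : Finset ℕ × Finset ℕ × Finset ℕ) = (Ae, Ao, O)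
    rw [hOA]
  right_inv t := by
    apply Subtype.ext
    rfl

lemma F1_card_odd {M : ℕ} (h : M % 2 = 1) : Nat.card (F1 M) = 0 := by
  have : IsEmpty (F1 M) := by
    constructor
    rintro ⟨⟨Ae, O⟩, -, -, hsum⟩
    have hsum' : 2 * Ae.sum id + 2 * O.sum id = M := hsum
    omega
  simp [Nat.card_of_isEmpty]

lemma F1_card_even {M : ℕ} (h : M % 2 = 0) : Nat.card (F1 M) = Nat.card (C1T (M / 2)) := by
  apply Nat.card_congr
  apply Equiv.subtypeEquivRight
  intro t
  constructor
  · rintro ⟨h1, h2, h3⟩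
    exact ⟨h1, h2, by omega⟩
  · rintro ⟨h1, h2, h3⟩
    exact ⟨h1, h2, by omega⟩

lemma C1T_zero : Nat.card (C1T 0) = 1 := by
  rw [Nat.card_eq_one_iff_unique]
  constructor
  · constructor
    rintro ⟨⟨A, O⟩, hA, hO, hsum⟩ ⟨⟨A', O'⟩, hA', hO', hsum'⟩
    have hs : A.sum id + O.sum id = 0 := hsum
    have hs' : A'.sum id + O'.sum id = 0 := hsum'
    have hAe : A = ∅ := by
      rw [Finset.eq_empty_iff_forall_notMem]
      intro x hx
      have h1 := hA x hx
      have h2 := mem_le_sum hx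
      omega
    have hOe : O = ∅ := by
      rw [Finset.eq_empty_iff_forall_notMem]
      intro x hx
      have h1 := hO x hx
      have h2 := mem_le_sum hx
      omega
    have hAe' : A' = ∅ := by
      rw [Finset.eq_empty_iff_forall_notMem]
      intro x hx
      have h1 := hA' x hx
      have h2 := mem_le_sum hx
      omega
    have hOe' : O' = ∅ := by
      rw [Finset.eq_empty_iff_forall_notMem]
      intro x hx
      have h1 := hO' x hx
      have h2 := mem_le_sum hx
      omega
    apply Subtype.ext
    show ((A, O) : Finset ℕ × Finset ℕ) = (A', O')
    rw [hAe, hOe, hAe', hOe']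
  · exact ⟨⟨(∅, ∅), fun x hx => by simp at hx, fun x hx => by simp at hx, by simp⟩⟩

lemma card_C1T_parity : ∀ M : ℕ, Nat.card (C1T M) ≡ (if M = 0 then 1 else 0) [MOD 2] := by
  intro M
  induction M using Nat.strong_induction_on with
  | _ M ih =>
    rcases Nat.eq_zero_or_pos M with rfl | hM
    · rw [C1T_zero]
      simp only [if_pos rfl]
      rfl
    · rw [if_neg (by omega)]
      have h1 : Nat.card (C1T M) = Nat.card (E1 M) := Nat.card_congr (c1tToE1 M)
      have h2 := card_modEq_fixed_two (swapE1 M) (swapE1_sq M)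
      rw [Nat.card_congr (fixedSwapEquiv M)] at h2
      rcases Nat.even_or_odd M with he | ho
      · have hE : M % 2 = 0 := by rcases he with ⟨k, hk⟩; omega
        rw [F1_card_even hE] at h2
        have h3 := ih (M / 2) (by omega)
        rw [if_neg (by omega)] at h3
        calc Nat.card (C1T M) = Nat.card (E1 M) := h1
          _ ≡ Nat.card (C1T (M / 2)) [MOD 2] := h2
          _ ≡ 0 [MOD 2] := h3
      · have hO : M % 2 = 1 := by rcases ho with ⟨k, hk⟩; omega
        rw [F1_card_odd hO] at h2
        calc Nat.card (C1T M) = Nat.card (E1 M) := h1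
          _ ≡ 0 [MOD 2] := h2

lemma card_GT_parity (M : ℕ) :
    Nat.card (GT M) ≡ (if M = 0 then 1 else 0) [MOD 2] :=
  (card_GT_modEq_C1T M).trans (card_C1T_parity M)

end Aux

namespace Aux
open Finset

lemma tcount_eq_X3 (n : ℕ) : _root_.Tcount 2 3 n = Nat.card (X3 n) := rfl

lemma three_dvd_X3 {n : ℕ} (h3 : ¬ 3 ∣ n) : 3 ∣ Nat.card (X3 n) :=
  three_dvd_card rotE rotE_pow_three (rotE_fixed h3)

lemma two_dvd_X3 {n : ℕ} (hnt : ¬ ∃ j, Tn j = n) : 2 ∣ Nat.card (X3 n) := by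
  have h1 : Nat.card (X3 n) = Nat.card (TriB n) := by
    rw [Nat.card_congr (x3ToTriD n), Nat.card_congr (triDToTriB n)]
  rw [h1, card_TriB_sum]
  apply Finset.dvd_sum
  intro j _
  rcases le_or_gt (Tn j) n with hle | hgt
  · rw [card_GTj_of_le hle]
    have := card_GT_parity (n - Tn j)
    have hne : ¬ (n - Tn j = 0) := by
      intro h0
      exact hnt ⟨j, by omega⟩
    rw [if_neg hne] at this
    exact (Nat.modEq_zero_iff_dvd).1 this
  · rw [card_GTj_of_gt hgt]
    exact Dvd.intro 0 rfl

lemma tn_square {N j : ℕ} (h : Tn j = 9 * N + 1) : ∃ u : ℕ, u ^ 2 = 8 * N + 1 := by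
  have h8 := eight_Tn_add_one j
  rw [h] at h8
  have h3 : 3 ∣ 2 * j + 1 := by
    have hdvd : 3 ∣ (2 * j + 1) ^ 2 := ⟨24 * N + 3, by omega⟩
    exact Nat.Prime.dvd_of_dvd_pow Nat.prime_three hdvd
  obtain ⟨u, hu⟩ := h3
  refine ⟨u, ?_⟩
  rw [hu] at h8
  ring_nf at h8 ⊢
  omega

theorem main (p : ℕ) (hp : p.Prime) (hp3 : 3 ≤ p) (r : ℕ)
    (hr1 : 1 ≤ r) (hr2 : r ≤ p - 1)
    (hqnr : ¬ IsSquare (((8 * r + 1 : ℕ) : ZMod p))) (n : ℕ) :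
    6 ∣ _root_.Tcount 2 3 (9 * (p * n + r) + 1) := by
  set N := p * n + r with hN
  rw [tcount_eq_X3]
  have h3 : 3 ∣ Nat.card (X3 (9 * N + 1)) := by
    apply three_dvd_X3
    omega
  have h2 : 2 ∣ Nat.card (X3 (9 * N + 1)) := by
    apply two_dvd_X3
    rintro ⟨j, hj⟩
    obtain ⟨u, hu⟩ := tn_square hj
    apply hqnr
    refine ⟨(u : ZMod p), ?_⟩
    have hcast : ((u ^ 2 : ℕ) : ZMod p) = ((8 * N + 1 : ℕ) : ZMod p) := by rw [hu]
    have hNr : (8 * N + 1 : ℕ) = 8 * r + 1 + 8 * n * p := by rw [hN]; ring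
    rw [hNr] at hcast
    push_cast at hcast
    rw [ZMod.natCast_self] at hcast
    have hc2 : ((8 * r + 1 : ℕ) : ZMod p) = (u : ZMod p) * (u : ZMod p) := by
      push_cast
      rw [← pow_two]
      rw [hcast]
      ring
    exact hc2
  omega

end Aux


theorem stmt12 (p : ℕ) (hp : p.Prime) (hp3 : 3 ≤ p) (r : ℕ)
    (hr1 : 1 ≤ r) (hr2 : r ≤ p - 1)
    (hqnr : ¬ IsSquare (((8 * r + 1 : ℕ) : ZMod p))) (n : ℕ) :
    6 ∣ Tcount 2 3 (9 * (p * n + r) + 1) := Aux.main p hp hp3 r hr1 hr2 hqnr n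
end
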